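/- Let r ≥ 1 and l ≥ 1 be integers, a_r a real number, and set K := l(r+2). Then Z(0,K)·𝔸_r + [ (1/(K+2))·B(0,K) − (1/(K+1))·A(0,K), 𝔸_r ] = [ a_r·(l+1)(r+2)/(K+1) ]·A(−1, K+r), where · denotes the action of a scalar function on a vector field by pointwise multiplication and [·,·] is the Lie bracket of vector fields. -/

import Mathlib

/-- Monomial `x^a * y^b` for integer exponents, zero if an exponent is negative. -/
noncomputable def M (a b : ℤ) : ℝ × ℝ → ℝ :=
  fun p => if 0 ≤ a ∧ 0 ≤ b then p.1 ^ a.toNat * p.2 ^ b.toNat else 0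

/-- The vector field `A(l,k)`. -/
noncomputable def A (l k : ℤ) : ℝ × ℝ → ℝ × ℝ :=
  fun p => (((k : ℝ) - (l : ℝ) + 1) / ((k : ℝ) + 2) * M (l + 1) (k - l) p,
            -(((l : ℝ) + 1) / ((k : ℝ) + 2)) * M l (k - l + 1) p)

/-- The vector field `B(l,k)`. -/
noncomputable def B (l k : ℤ) : ℝ × ℝ → ℝ × ℝ :=
  fun p => (M (l + 1) (k - l) p, M l (k - l + 1) p)

/-- The scalar monomial function `Z(l,k)`. -/
noncomputable def Z (l k : ℤ) : ℝ × ℝ → ℝ := M l (k - l)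

/-- Lie bracket of planar vector fields: `[X,Y](p) = DY(p)(X(p)) - DX(p)(Y(p))`. -/
noncomputable def lieBracket (X Y : ℝ × ℝ → ℝ × ℝ) : ℝ × ℝ → ℝ × ℝ :=
  fun p => fderiv ℝ Y p (X p) - fderiv ℝ X p (Y p)

/-- Pochhammer-type product `(a)^n_b = a (a+b) (a+2b) ⋯ (a+(n-1)b)`. -/
noncomputable def poch (a b : ℝ) (n : ℕ) : ℝ := ∏ j ∈ Finset.range n, (a + (j : ℝ) * b)

/-- The vector field `𝔸_r = A(1,0) + a_r • A(-1,r)`, i.e. `(a_r y^{r+1}, -x)`. -/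
noncomputable def bbA (r : ℤ) (ar : ℝ) : ℝ × ℝ → ℝ × ℝ :=
  fun p => A 1 0 p + ar • A (-1) r p

/-- `Z(0,K)·𝔸_r + [(1/(K+2))B(0,K) - (1/(K+1))A(0,K), 𝔸_r]` with `K = l(r+2)`. -/
lemma hasFDerivAt_snd_pow (k : ℕ) (p : ℝ × ℝ) :
    HasFDerivAt (fun q : ℝ × ℝ => q.2 ^ k)
      (((k : ℝ) * p.2 ^ (k - 1)) • ContinuousLinearMap.snd ℝ ℝ ℝ) p :=
  (hasDerivAt_pow k p.2).comp_hasFDerivAt p hasFDerivAt_snd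

theorem stmt10 (r l : ℤ) (ar : ℝ) (hr : 1 ≤ r) (hl : 1 ≤ l) :
    (fun p => Z 0 (l * (r + 2)) p • bbA r ar p
        + lieBracket
            (fun q => (1 / (((l * (r + 2) : ℤ) : ℝ) + 2)) • B 0 (l * (r + 2)) q
                - (1 / (((l * (r + 2) : ℤ) : ℝ) + 1)) • A 0 (l * (r + 2)) q)
            (bbA r ar) p)
      = fun p =>
        (ar * ((l : ℝ) + 1) * ((r : ℝ) + 2) / (((l * (r + 2) : ℤ) : ℝ) + 1)) •
          A (-1) (l * (r + 2) + r) p := by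
  obtain ⟨n, hn⟩ : ∃ n : ℕ, l * (r + 2) = (n : ℤ) :=
    ⟨(l * (r + 2)).toNat, (Int.toNat_of_nonneg (by nlinarith)).symm⟩
  obtain ⟨m, hm⟩ : ∃ m : ℕ, r = (m : ℤ) := ⟨r.toNat, (Int.toNat_of_nonneg (by linarith)).symm⟩
  have hln : (l : ℝ) * ((m : ℝ) + 2) = (n : ℝ) := by
    have : l * ((m : ℤ) + 2) = (n : ℤ) := by rw [← hm]; exact hn
    exact_mod_cast this
  rw [hn, hm]
  have hn1 : ((n : ℝ) + 1) ≠ 0 := by positivity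
  have hXfun : (fun q => (1 / (((n : ℤ) : ℝ) + 2)) • B 0 (n : ℤ) q
                - (1 / (((n : ℤ) : ℝ) + 1)) • A 0 (n : ℤ) q)
      = fun q : ℝ × ℝ => ((0 : ℝ), (1 / ((n : ℝ) + 1)) * q.2 ^ (n + 1)) := by
    funext q
    simp only [B, A, M, Z]
    norm_num [Prod.smul_mk, Prod.mk_sub_mk, Prod.mk.injEq,
      (by omega : ((n:ℤ) + 1).toNat = n + 1)]
    field_simp
    split_ifs with h
    · have h2 : (2:ℝ) + (n:ℝ) ≠ 0 := by positivity
      have h3 : (2:ℝ) + (n:ℝ) * 3 + (n:ℝ) ^ 2 ≠ 0 := by positivity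
      field_simp
      refine ⟨?_, ?_⟩ <;> ring
    · omega
  have hYfun : bbA (m : ℤ) ar = fun q : ℝ × ℝ => (ar * q.2 ^ (m + 1), -q.1) := by
    funext q
    simp only [bbA, A, M]
    norm_num [Prod.smul_mk, Prod.mk_add_mk, Prod.mk.injEq,
      (by positivity : (0:ℤ) ≤ (m:ℤ) + 1), (by omega : ((m:ℤ) + 1).toNat = m + 1)]
    field_simp
    refine Or.inl ?_
    ring
  rw [hXfun, hYfun]
  funext p
  have hX : HasFDerivAt (fun q : ℝ × ℝ => ((0 : ℝ), (1 / ((n : ℝ) + 1)) * q.2 ^ (n + 1)))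
      (((0 : ℝ × ℝ →L[ℝ] ℝ)).prod ((1 / ((n : ℝ) + 1)) •
        ((((n + 1 : ℕ) : ℝ) * p.2 ^ (n + 1 - 1)) • ContinuousLinearMap.snd ℝ ℝ ℝ))) p :=
    HasFDerivAt.prodMk (hasFDerivAt_const _ _) ((hasFDerivAt_snd_pow (n + 1) p).const_mul _)
  have hY : HasFDerivAt (fun q : ℝ × ℝ => (ar * q.2 ^ (m + 1), -q.1))
      (ContinuousLinearMap.prod
        (ar • ((((m + 1 : ℕ) : ℝ) * p.2 ^ (m + 1 - 1)) • ContinuousLinearMap.snd ℝ ℝ ℝ))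
        (-(ContinuousLinearMap.fst ℝ ℝ ℝ))) p :=
    HasFDerivAt.prodMk ((hasFDerivAt_snd_pow (m + 1) p).const_mul _) hasFDerivAt_fst.neg
  simp only [lieBracket, hX.fderiv, hY.fderiv]
  simp only [ContinuousLinearMap.prod_apply, ContinuousLinearMap.smul_apply,
    ContinuousLinearMap.coe_snd', ContinuousLinearMap.coe_fst', ContinuousLinearMap.neg_apply,
    ContinuousLinearMap.zero_apply, Nat.add_sub_cancel, smul_eq_mul]
  have hZ : Z 0 (n : ℤ) p = p.2 ^ n := by simp [Z, M]
  have hA : A (-1) ((n : ℤ) + (m : ℤ)) p = (p.2 ^ (n + m + 1), 0) := by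
    simp only [A, M]
    norm_num [(by positivity : (0:ℤ) ≤ (n:ℤ) + (m:ℤ) + 1),
      (by omega : ((n:ℤ) + (m:ℤ) + 1).toNat = n + m + 1), Prod.mk.injEq]
    have h2 : ((n:ℝ) + (m:ℝ) + 2) ≠ 0 := by positivity
    field_simp
    ring
  rw [hZ, hA]
  simp only [Prod.smul_mk, Prod.mk_sub_mk, Prod.mk_add_mk, smul_eq_mul, Prod.mk.injEq]
  have hc : ar * ((l : ℝ) + 1) * (((m : ℤ) : ℝ) + 2) / (((n : ℤ) : ℝ) + 1)
      = ar * ((n : ℝ) + (m : ℝ) + 2) / ((n : ℝ) + 1) := by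
    push_cast
    rw [div_eq_div_iff hn1 hn1]
    linear_combination ar * ((n:ℝ) + 1) * hln
  constructor
  · rw [hc]
    field_simp
    push_cast
    ring
  · push_cast
    field_simp
    ring
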